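/- For every s with 1/2 < s < 1 there exists a constant C > 0 (depending only on s) such that for all τ ∈ ℝ, all integers k ∈ ℤ, all nonzero integers l ∈ ℤ, and all natural numbers m ≥ 1, setting Λ_m = k² + (m² + (m+1)²)/2, one has |iτ + k² + l² − Λ_m|⁻¹ ≤ C / (m^{1−s} |l|^{s}). -/

import Mathlib

lemma key_real_bound (s M N : ℝ) (hs₁ : 0 < s) (hs₂ : s < 1) (hM : 1 ≤ M) (hN : 1 ≤ N)
    (h : N ≤ M ∨ M + 1 ≤ N) :
    (1/2) * (M ^ (1-s) * N ^ s) ≤ |N^2 - (M^2 + (M+1)^2)/2| := by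
  have hM0 : (0:ℝ) < M := by linarith
  have hN0 : (0:ℝ) < N := by linarith
  rcases h with h | h
  · -- N ≤ M : the expression is negative
    have h1 : N ^ s ≤ M ^ s := Real.rpow_le_rpow (le_of_lt hN0) h (le_of_lt hs₁)
    have h2 : M ^ (1-s) * M ^ s = M := by
      rw [← Real.rpow_add hM0]; norm_num
    have h3 : M ^ (1-s) * N ^ s ≤ M := by
      calc M ^ (1-s) * N ^ s ≤ M ^ (1-s) * M ^ s := by
            apply mul_le_mul_of_nonneg_left h1 (Real.rpow_nonneg (le_of_lt hM0) _)
        _ = M := h2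
    have hN2 : N^2 ≤ M^2 := by nlinarith
    have habs : -(N^2 - (M^2 + (M+1)^2)/2) ≤ |N^2 - (M^2 + (M+1)^2)/2| := neg_le_abs _
    nlinarith
  · -- M + 1 ≤ N : the expression is positive
    have h1 : M ^ (1-s) ≤ N ^ (1-s) :=
      Real.rpow_le_rpow (le_of_lt hM0) (by linarith) (by linarith)
    have h2 : N ^ (1-s) * N ^ s = N := by
      rw [← Real.rpow_add hN0]; norm_num
    have h3 : M ^ (1-s) * N ^ s ≤ N := by
      calc M ^ (1-s) * N ^ s ≤ N ^ (1-s) * N ^ s := by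
            apply mul_le_mul_of_nonneg_right h1 (Real.rpow_nonneg (le_of_lt hN0) _)
        _ = N := h2
    have habs : (N^2 - (M^2 + (M+1)^2)/2) ≤ |N^2 - (M^2 + (M+1)^2)/2| := le_abs_self _
    nlinarith [mul_nonneg (by linarith : (0:ℝ) ≤ N - M - 1) (by linarith : (0:ℝ) ≤ N + M)]

/-- For every `1/2 < s < 1` there is a constant `C > 0` (depending only on `s`)
such that for all `τ ∈ ℝ`, `k ∈ ℤ`, nonzero `l ∈ ℤ` and `m ≥ 1`, with
`Λ_m = k² + (m² + (m+1)²)/2`, one has `|iτ + k² + l² − Λ_m|⁻¹ ≤ C / (m^{1−s} |l|^s)`. -/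
theorem resolvent_bound_fractional (s : ℝ) (hs₁ : 1 / 2 < s) (hs₂ : s < 1) :
    ∃ C : ℝ, 0 < C ∧ ∀ (τ : ℝ) (k l : ℤ) (m : ℕ), l ≠ 0 → 1 ≤ m →
      (‖Complex.I * (τ : ℂ) + (k : ℂ) ^ 2 + (l : ℂ) ^ 2 -
          ((k : ℂ) ^ 2 + ((m : ℂ) ^ 2 + ((m : ℂ) + 1) ^ 2) / 2)‖)⁻¹ ≤
        C / ((m : ℝ) ^ (1 - s) * |(l : ℝ)| ^ s) := by
  refine ⟨2, by norm_num, fun τ k l m hl hm => ?_⟩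
  set z : ℂ := Complex.I * (τ : ℂ) + (k : ℂ) ^ 2 + (l : ℂ) ^ 2 -
      ((k : ℂ) ^ 2 + ((m : ℂ) ^ 2 + ((m : ℂ) + 1) ^ 2) / 2) with hz
  set M : ℝ := (m : ℝ) with hMdef
  set N : ℝ := |(l : ℝ)| with hNdef
  have hM : 1 ≤ M := by rw [hMdef]; exact_mod_cast hm
  have hN : 1 ≤ N := by
    rw [hNdef]
    exact_mod_cast Int.one_le_abs hl
  have hcase : N ≤ M ∨ M + 1 ≤ N := by
    rcases le_or_gt l.natAbs m with h | h
    · left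
      rw [hNdef, hMdef, ← Int.cast_abs, Int.abs_eq_natAbs]
      exact_mod_cast h
    · right
      rw [hNdef, hMdef, ← Int.cast_abs, Int.abs_eq_natAbs]
      exact_mod_cast h
  have hkey := key_real_bound s M N (by linarith) hs₂ hM hN hcase
  have hre : z.re = N^2 - (M^2 + (M+1)^2)/2 := by
    have hz2 : z = Complex.I * (τ : ℂ) +
        ((((l:ℝ)^2 - ((m:ℝ)^2 + ((m:ℝ)+1)^2)/2 : ℝ)) : ℂ) := by
      rw [hz]; push_cast; ring
    rw [hz2, hNdef, hMdef, sq_abs]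
    simp only [Complex.add_re, Complex.mul_re, Complex.I_re, Complex.I_im,
      Complex.ofReal_re, Complex.ofReal_im]
    ring
  have habs : (1/2) * (M ^ (1-s) * N ^ s) ≤ ‖z‖ := by
    calc (1/2) * (M ^ (1-s) * N ^ s) ≤ |z.re| := by rw [hre]; exact hkey
      _ ≤ ‖z‖ := Complex.abs_re_le_norm z
  have hD : 0 < M ^ (1-s) * N ^ s :=
    mul_pos (Real.rpow_pos_of_pos (by linarith) _) (Real.rpow_pos_of_pos (by linarith) _)
  have hpos : 0 < (1/2) * (M ^ (1-s) * N ^ s) := by positivity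
  calc (‖z‖)⁻¹ ≤ ((1/2) * (M ^ (1-s) * N ^ s))⁻¹ :=
        inv_anti₀ hpos habs
    _ = 2 / (M ^ (1-s) * N ^ s) := by field_simp
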